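/- For every integer p ≥ 3 and all x in (0, π/2), 4/π² < (1 - cos(x)/cos(x/p))/x² < (p² - 1)/(2p²). -/

import Mathlib

open Real

set_option maxHeartbeats 1000000 in
lemma cos_poly_bound' (x : ℝ) (hx : |x| ≤ 2) :
    |Real.cos x - (1 - x^2/2 + x^4/24 - x^6/720)| ≤ |x|^8 / 20160 := by
  have habs1 : ‖(x:ℂ) * Complex.I‖ = |x| := by simp
  have habs2 : ‖-(x:ℂ) * Complex.I‖ = |x| := by simp
  have h1 : ‖(x:ℂ) * Complex.I‖ / (Nat.succ 8) ≤ 1 / 2 := by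
    rw [habs1]; norm_num; linarith
  have h2 : ‖-(x:ℂ) * Complex.I‖ / (Nat.succ 8) ≤ 1 / 2 := by
    rw [habs2]; norm_num; linarith
  have e1 := Complex.exp_bound' (n := 8) h1
  have e2 := Complex.exp_bound' (n := 8) h2
  rw [habs1] at e1
  rw [habs2] at e2
  simp only [neg_mul] at e1 e2
  norm_num [Nat.factorial] at e1 e2
  have hI4 : (Complex.I)^4 = 1 := by
    have : (4:ℕ) = 2*2 := by norm_num
    rw [this, pow_mul, Complex.I_sq]; norm_num
  have hI6 : (Complex.I)^6 = -1 := by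
    have : (6:ℕ) = 2*3 := by norm_num
    rw [this, pow_mul, Complex.I_sq]; norm_num
  have hs : (∑ m ∈ Finset.range 8, ((x:ℂ)*Complex.I)^m / m.factorial)
      + (∑ m ∈ Finset.range 8, (-((x:ℂ)*Complex.I))^m / m.factorial)
      = 2*(1 - (x:ℂ)^2/2 + (x:ℂ)^4/24 - (x:ℂ)^6/720) := by
    simp [Finset.sum_range_succ, Nat.factorial]
    ring_nf
    simp only [Complex.I_sq, hI4, hI6]
    ring
  have hcos : Complex.cos x - (1 - (x:ℂ)^2/2 + (x:ℂ)^4/24 - (x:ℂ)^6/720)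
      = ((Complex.exp ((x:ℂ)*Complex.I) - ∑ m ∈ Finset.range 8, ((x:ℂ)*Complex.I)^m / m.factorial)
        + (Complex.exp (-((x:ℂ)*Complex.I)) - ∑ m ∈ Finset.range 8, (-((x:ℂ)*Complex.I))^m / m.factorial)) / 2 := by
    rw [Complex.cos]
    simp only [neg_mul]
    linear_combination hs/2
  have key : |Real.cos x - (1 - x^2/2 + x^4/24 - x^6/720)|
      = ‖Complex.cos x - (1 - (x:ℂ)^2/2 + (x:ℂ)^4/24 - (x:ℂ)^6/720)‖ := by
    rw [← Real.norm_eq_abs, ← Complex.norm_real]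
    congr 1
    push_cast [Complex.ofReal_cos]
    ring
  rw [key, hcos]
  set A := Complex.exp ((x:ℂ)*Complex.I) - ∑ m ∈ Finset.range 8, ((x:ℂ)*Complex.I)^m / m.factorial with hA
  set B := Complex.exp (-((x:ℂ)*Complex.I)) - ∑ m ∈ Finset.range 8, (-((x:ℂ)*Complex.I))^m / m.factorial with hB
  have habs : ‖(A + B)/2‖ = ‖A+B‖ / 2 := by
    rw [norm_div]; norm_num
  rw [habs]
  have := norm_add_le A B
  have h8 : (0:ℝ) ≤ |x|^8 := by positivity
  nlinarith [this, e1, e2]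

lemma cos_le_poly' {x : ℝ} (h0 : 0 ≤ x) (h2 : x ≤ 2) :
    Real.cos x ≤ 1 - x^2/2 + x^4/24 - x^6/720 + x^8/20160 := by
  have hb := cos_poly_bound' x (by rw [abs_of_nonneg h0]; exact h2)
  rw [abs_of_nonneg h0] at hb
  have := (abs_le.1 hb).2
  linarith

lemma cos_ge_poly' {x : ℝ} (h0 : 0 ≤ x) (h2 : x ≤ 2) :
    1 - x^2/2 + x^4/24 - x^6/720 - x^8/20160 ≤ Real.cos x := by
  have hb := cos_poly_bound' x (by rw [abs_of_nonneg h0]; exact h2)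
  rw [abs_of_nonneg h0] at hb
  have := (abs_le.1 hb).1
  linarith

lemma aux_upper' {q y : ℝ} (hq : 9 ≤ q) (hy : 0 < y) (hy2 : y ≤ 2.4675) :
    0 < 840*q^2*(q-1)*(q-5)*y^2 - 28*y^3*q*(q^3-1) - y^4*(q^4+1) := by
  have hq0 : 0 < q := by linarith
  have hbr : 0 < 840*q^2*(q-1)*(q-5) - 28*(2.4675)*q*(q^3-1) - (2.4675)^2*(q^4+1) := by
    nlinarith [mul_nonneg (sub_nonneg.2 hq) (le_of_lt (pow_pos hq0 3)),
      mul_nonneg (sub_nonneg.2 hq) (le_of_lt (pow_pos hq0 2)),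
      mul_nonneg (sub_nonneg.2 hq) hq0.le, sq_nonneg (q-9), pow_pos hq0 4]
  have h1 : 0 ≤ 28*q*(q^3-1)*y^2*(2.4675 - y) := by
    have : (0:ℝ) ≤ q^3 - 1 := by nlinarith
    have hyy : (0:ℝ) ≤ 2.4675 - y := by linarith
    positivity
  have h2 : 0 ≤ (q^4+1)*y^2*((2.4675)^2 - y^2) := by
    have : (0:ℝ) ≤ (2.4675)^2 - y^2 := by nlinarith
    positivity
  nlinarith [mul_pos (mul_pos hy hy) hbr, h1, h2]

lemma aux_low' {w y : ℝ} (hw1 : 9.8695 < w) (hw2 : w < 9.8697) (hy : 0 < y) (hy2 : y ≤ 1.69) :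
    w*(1 - y/2 + y^2/24 - y^3/720 + y^4/20160) < (1 - y/18)*(w - 4*y) := by
  nlinarith [mul_nonneg (sub_nonneg.2 hy2) hy.le, mul_pos hy hy,
    mul_nonneg (mul_nonneg (sub_nonneg.2 hy2) hy.le) hy.le,
    mul_nonneg (mul_nonneg (mul_nonneg (sub_nonneg.2 hy2) hy.le) hy.le) hy.le]

set_option maxHeartbeats 2000000 in
theorem stmt_4 (p : ℕ) (hp : 3 ≤ p) (x : ℝ) (hx0 : 0 < x) (hx1 : x < π / 2) :
    4 / π ^ 2 < (1 - cos x / cos (x / p)) / x ^ 2 ∧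
      (1 - cos x / cos (x / p)) / x ^ 2 < ((p : ℝ) ^ 2 - 1) / (2 * (p : ℝ) ^ 2) := by
  have hπ1 : 3.141592 < π := pi_gt_d6
  have hπ2 : π < 3.141593 := pi_lt_d6
  have hπs1 : 9.8695 < π^2 := by nlinarith
  have hπs2 : π^2 < 9.8697 := by nlinarith
  have hp3 : (3:ℝ) ≤ (p:ℝ) := by exact_mod_cast hp
  have hp0 : (0:ℝ) < (p:ℝ) := by linarith
  set t := x / (p:ℝ) with htdef
  have hptx : (p:ℝ) * t = x := by rw [htdef]; field_simp
  have ht0 : 0 < t := div_pos hx0 hp0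
  have hxlt : x < 1.5708 := by linarith
  have htlt : t < 0.5236 := by
    rw [htdef, div_lt_iff₀ hp0]; nlinarith
  have hcx : 0 < cos x := cos_pos_of_mem_Ioo ⟨by linarith, hx1⟩
  have hct : 0 < cos t := cos_pos_of_mem_Ioo ⟨by linarith, by nlinarith⟩
  have hx2 : (0:ℝ) < x^2 := by positivity
  have hπ0 : (0:ℝ) < π^2 := by positivity
  have hq9 : (9:ℝ) ≤ (p:ℝ)^2 := by nlinarith
  have hst : (p:ℝ)^2 * t^2 = x^2 := by rw [← hptx]; ring
  have hctq : 1 - x^2/18 ≤ cos t := by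
    have h1 : 1 - t^2/2 ≤ cos t := one_sub_sq_div_two_le_cos
    have h2 : t^2 ≤ x^2/9 := by nlinarith [sq_nonneg t]
    linarith
  have hx24 : x^2 ≤ 2.4675 := by nlinarith
  constructor
  · -- lower bound
    have K1 : π^2 * cos x < cos t * (π^2 - 4*x^2) := by
      have hpos : 0 < π^2 - 4*x^2 := by nlinarith
      have step : (1 - x^2/18) * (π^2 - 4*x^2) ≤ cos t * (π^2 - 4*x^2) :=
        mul_le_mul_of_nonneg_right hctq hpos.le
      rcases le_or_gt x 1.3 with hc | hc
      · have hub : cos x ≤ 1 - x^2/2 + x^4/24 - x^6/720 + x^8/20160 :=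
          cos_le_poly' hx0.le (by linarith)
        have key : π^2 * (1 - x^2/2 + (x^2)^2/24 - (x^2)^3/720 + (x^2)^4/20160)
            < (1 - x^2/18) * (π^2 - 4*x^2) :=
          aux_low' hπs1 hπs2 hx2 (by nlinarith)
        nlinarith [key, hub, step, hπ0]
      · have hε : 0 < π/2 - x := by linarith
        have hsin : cos x < π/2 - x := by
          have := Real.sin_lt hε
          rwa [Real.sin_pi_div_two_sub] at this
        have hbr : 0 ≤ 2*(1 - x^2/18)*(π + 2*x) - π^2 := by
          nlinarith [mul_nonneg (sub_nonneg.2 hc.le) (sub_nonneg.2 hxlt.le)]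
        nlinarith [step, mul_pos hπ0 (sub_pos.2 hsin), mul_nonneg hbr hε.le,
          mul_pos hε (show (0:ℝ) < π + 2*x by linarith)]
    have hdiv : cos x / cos t < 1 - 4*x^2/π^2 := by
      rw [div_lt_iff₀ hct]
      have h : 1 - 4*x^2/π^2 = (π^2 - 4*x^2)/π^2 := by field_simp
      rw [h, div_mul_eq_mul_div, lt_div_iff₀ hπ0]
      nlinarith [K1]
    rw [lt_div_iff₀ hx2]
    have he : 4 / π^2 * x^2 = 4*x^2/π^2 := by ring
    linarith
  · -- upper bound
    have hubt : cos t ≤ 1 - t^2/2 + t^4/24 - t^6/720 + t^8/20160 :=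
      cos_le_poly' ht0.le (by linarith)
    have hlbx : 1 - x^2/2 + x^4/24 - x^6/720 - x^8/20160 ≤ cos x :=
      cos_ge_poly' hx0.le (by linarith)
    have hctq2 : 1 - t^2/2 ≤ cos t := one_sub_sq_div_two_le_cos
    set q := (p:ℝ)^2 with hqdef
    have hq0 : (0:ℝ) < q := by positivity
    have hE := aux_upper' (q := q) (y := x^2) hq9 hx2 hx24
    -- G > 0 where G is the polynomial gap
    have hqs : q * t^2 = x^2 := hst
    have hid : 10080*q^3 * ((q-1)*x^2*(1 - t^2/2)
          - 2*q*((x^2 - t^2)/2 - ((x^2)^2 - (t^2)^2)/24 + ((x^2)^3 - (t^2)^3)/720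
              + ((x^2)^4 + (t^2)^4)/20160))
        = 840*q^2*(q-1)*(q-5)*(x^2)^2 - 28*(x^2)^3*q*(q^3-1) - (x^2)^4*(q^4+1) := by
      linear_combination (-(x^2)^3 + 28*q*(x^2)^2 - q*(x^2)^2*t^2 + 4200*q^2*x^2
        + 28*q^2*x^2*t^2 - q^2*x^2*(t^2)^2 + 10080*q^3 - 840*q^3*t^2 + 28*q^3*(t^2)^2
        - q^3*(t^2)^3 - 5040*q^3*x^2) * hqs
    have hG : 0 < (q-1)*x^2*(1 - t^2/2)
          - 2*q*((x^2 - t^2)/2 - ((x^2)^2 - (t^2)^2)/24 + ((x^2)^3 - (t^2)^3)/720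
              + ((x^2)^4 + (t^2)^4)/20160) := by
      have h3 : (0:ℝ) < 10080*q^3 := by positivity
      nlinarith [hE, hid, h3]
    have K2 : (cos t - cos x) * (2*q) < (q - 1) * x^2 * cos t := by
      have hL : (cos t - cos x) * (2*q) ≤
          ((1 - t^2/2 + t^4/24 - t^6/720 + t^8/20160)
            - (1 - x^2/2 + x^4/24 - x^6/720 - x^8/20160)) * (2*q) := by
        apply mul_le_mul_of_nonneg_right (by linarith) (by linarith)
      have hR : (q - 1) * x^2 * (1 - t^2/2) ≤ (q - 1) * x^2 * cos t := by
        apply mul_le_mul_of_nonneg_left hctq2 (by nlinarith)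
      nlinarith [hL, hR, hG]
    rw [div_lt_div_iff₀ hx2 (by positivity)]
    have h1 : (1 - cos x / cos t) * (2*(p:ℝ)^2) = ((cos t - cos x) * (2*q)) / cos t := by
      field_simp
      rw [hqdef]
    rw [h1, div_lt_iff₀ hct]
    nlinarith [K2]
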